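/- Define F(x,t) = (8π²·t + 1)·sin(2πx)/(2√t) for x ∈ [0,1] and t > 0, and define u(x,t) = √t·sin(2πx) for x ∈ [0,1] and t ≥ 0. Then u is continuous on [0,1]×[0,∞), u(x,0) = 0 for all x ∈ [0,1], u(0,t) = u(1,t) = 0 for all t ≥ 0, and for every t > 0 and x ∈ (0,1), ∂u/∂t(x,t) − ∂²u/∂x²(x,t) = F(x,t). (This gives an unbounded, t=0-discontinuous forcing term F whose corresponding solution of the Dirichlet heat problem is the unbounded function u.) -/

import Mathlib

open MeasureTheory Set Filter
open scoped Real Topology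

lemma deriv_x_aux (t : ℝ) :
    deriv (fun ξ : ℝ => Real.sqrt t * Real.sin (2 * π * ξ)) =
      fun ξ : ℝ => Real.sqrt t * (Real.cos (2 * π * ξ) * (2 * π)) := by
  funext x
  have h : HasDerivAt (fun ξ : ℝ => Real.sqrt t * Real.sin (2 * π * ξ))
      (Real.sqrt t * (Real.cos (2 * π * x) * (2 * π))) x := by
    have h1 : HasDerivAt (fun ξ : ℝ => 2 * π * ξ) (2 * π) x := by
      simpa using (hasDerivAt_id x).const_mul (2 * π)
    exact ((Real.hasDerivAt_sin (2 * π * x)).comp x h1).const_mul _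
  exact h.deriv

/-- With `F(x,t) = (8π²t + 1) sin(2πx)/(2√t)` (for `t > 0`) and
`u(x,t) = √t · sin(2πx)`: `u` is continuous on `[0,1] × [0,∞)`, `u(x,0) = 0`,
`u(0,t) = u(1,t) = 0`, and for every `t > 0` and `x ∈ (0,1)`,
`∂u/∂t (x,t) − ∂²u/∂x² (x,t) = F(x,t)`.
This exhibits an unbounded forcing term, discontinuous at `t = 0`, whose
corresponding solution of the Dirichlet heat problem is the unbounded function `u`. -/
theorem unbounded_example_heat_equation :
    let F : ℝ → ℝ → ℝ := fun x t => (8 * π ^ 2 * t + 1) * Real.sin (2 * π * x) / (2 * Real.sqrt t)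
    let u : ℝ → ℝ → ℝ := fun x t => Real.sqrt t * Real.sin (2 * π * x)
    ContinuousOn (fun p : ℝ × ℝ => u p.1 p.2) (Set.Icc 0 1 ×ˢ Set.Ici 0) ∧
    (∀ x ∈ Set.Icc (0 : ℝ) 1, u x 0 = 0) ∧
    (∀ t ≥ (0 : ℝ), u 0 t = 0 ∧ u 1 t = 0) ∧
    (∀ t > (0 : ℝ), ∀ x ∈ Set.Ioo (0 : ℝ) 1,
      deriv (fun τ => u x τ) t - deriv (deriv (fun ξ => u ξ t)) x = F x t) := by
  intro F u
  refine ⟨?_, ?_, ?_, ?_⟩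
  · exact ((Real.continuous_sqrt.comp continuous_snd).mul
      ((Real.continuous_sin.comp (continuous_const.mul continuous_fst)))).continuousOn
  · intro x _; simp [u]
  · intro t _
    constructor <;> simp [u, Real.sin_two_pi]
  · intro t ht x _
    have hsq : Real.sqrt t ≠ 0 := by positivity
    -- time derivative
    have hT := (Real.hasDerivAt_sqrt (ne_of_gt ht)).mul_const (Real.sin (2 * π * x))
    -- second space derivative
    have hX : deriv (deriv (fun ξ : ℝ => Real.sqrt t * Real.sin (2 * π * ξ))) x
        = Real.sqrt t * (-Real.sin (2 * π * x) * (2 * π) * (2 * π)) := by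
      rw [deriv_x_aux]
      have h1 : HasDerivAt (fun ξ : ℝ => 2 * π * ξ) (2 * π) x := by
        simpa using (hasDerivAt_id x).const_mul (2 * π)
      have h2 : HasDerivAt (fun ξ : ℝ => Real.sqrt t * (Real.cos (2 * π * ξ) * (2 * π)))
          (Real.sqrt t * (-Real.sin (2 * π * x) * (2 * π) * (2 * π))) x := by
        have := (((Real.hasDerivAt_cos (2 * π * x)).comp x h1).mul_const (2 * π)).const_mul
          (Real.sqrt t)
        exact this
      exact h2.deriv
    simp only [u, F]
    rw [hT.deriv, hX]
    have hts : Real.sqrt t * Real.sqrt t = t := Real.mul_self_sqrt ht.le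
    field_simp
    linear_combination (8 * π ^ 2 * Real.sin (2 * π * x)) * hts
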